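/- If X and Y are random variables bounded by constants ‖X‖_∞ ≤ b and ‖Y‖_∞ ≤ b, and X is measurable with respect to a σ-algebra 𝒜 while Y is measurable with respect to ℬ, then |Cov(X,Y)| ≤ 4 b² α(𝒜, ℬ), where α(𝒜,ℬ) = sup_{A∈𝒜, B∈ℬ} |P(A∩B) − P(A)P(B)| is the strong mixing coefficient. -/

import Mathlib

open MeasureTheory


/-- Pull-out: for `m`-strongly-measurable bounded `f` and integrable `g`,
`∫ f g = ∫ f ⋅ E[g|m]`. -/
theorem aux_pull {Ω : Type*} {m0 : MeasurableSpace Ω} (μ : Measure Ω) [IsProbabilityMeasure μ]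
    {m : MeasurableSpace Ω} (hm : m ≤ m0) {f g : Ω → ℝ}
    (hf : StronglyMeasurable[m] f) (hg : Integrable g μ) {c : ℝ}
    (hfb : ∀ᵐ ω ∂μ, ‖f ω‖ ≤ c) :
    ∫ ω, f ω * g ω ∂μ = ∫ ω, f ω * (μ[g|m]) ω ∂μ := by
  have h1 : μ[f * g|m] =ᵐ[μ] f * μ[g|m] :=
    condExp_stronglyMeasurable_mul_of_bound hm hf hg c hfb
  calc ∫ ω, f ω * g ω ∂μ = ∫ ω, (μ[f * g|m]) ω ∂μ :=
        (integral_condExp (μ := μ) (f := f * g) hm).symm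
    _ = ∫ ω, f ω * (μ[g|m]) ω ∂μ := integral_congr_ae h1

/-- Key step: bound `|∫ f g|` by `c` times the integral of a sign variable times `g`. -/
theorem aux_step {Ω : Type*} {m0 : MeasurableSpace Ω} (μ : Measure Ω) [IsProbabilityMeasure μ]
    {m : MeasurableSpace Ω} (hm : m ≤ m0) {f g : Ω → ℝ}
    (hf : StronglyMeasurable[m] f) (hg : Integrable g μ) {c : ℝ} (hc : 0 ≤ c)
    (hfb : ∀ᵐ ω ∂μ, |f ω| ≤ c) :
    ∃ ε : Ω → ℝ, Measurable[m] ε ∧ (∀ ω, ε ω = 1 ∨ ε ω = -1) ∧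
      |∫ ω, f ω * g ω ∂μ| ≤ c * ∫ ω, ε ω * g ω ∂μ := by
  set h : Ω → ℝ := μ[g|m] with hh
  refine ⟨fun ω => if 0 ≤ h ω then 1 else -1, ?_, fun ω => by by_cases h0 : 0 ≤ h ω <;> simp [h0], ?_⟩
  · have hs : MeasurableSet[m] {ω | 0 ≤ h ω} :=
      (stronglyMeasurable_condExp (m := m)).measurable measurableSet_Ici
    exact Measurable.ite hs measurable_const measurable_const
  · set ε : Ω → ℝ := fun ω => if 0 ≤ h ω then 1 else -1 with hε
    have hεb : ∀ᵐ ω ∂μ, ‖ε ω‖ ≤ 1 := by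
      refine Filter.Eventually.of_forall fun ω => ?_
      by_cases h0 : 0 ≤ h ω <;> simp [hε, h0]
    have hεm : StronglyMeasurable[m] ε := by
      have hs : MeasurableSet[m] {ω | 0 ≤ h ω} :=
        (stronglyMeasurable_condExp (m := m)).measurable measurableSet_Ici
      exact (Measurable.ite hs measurable_const measurable_const).stronglyMeasurable
    have hεh : ∀ ω, ε ω * h ω = |h ω| := by
      intro ω; by_cases h0 : 0 ≤ h ω
      · simp [hε, h0, abs_of_nonneg h0]
      · simp [hε, h0, abs_of_neg (lt_of_not_ge h0)]
    have hεg : ∫ ω, ε ω * g ω ∂μ = ∫ ω, |h ω| ∂μ := by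
      rw [aux_pull μ hm hεm hg hεb]
      exact integral_congr_ae (Filter.Eventually.of_forall fun ω => hεh ω)
    have hfgpull : ∫ ω, f ω * g ω ∂μ = ∫ ω, f ω * h ω ∂μ := by
      refine aux_pull μ hm hf hg (c := c) ?_
      simpa [Real.norm_eq_abs] using hfb
    have hint : Integrable h μ := integrable_condExp
    have hintfh : Integrable (fun ω => f ω * h ω) μ :=
      hint.bdd_mul ((hf.mono hm).aestronglyMeasurable)
        (by simpa [Real.norm_eq_abs] using hfb)
    calc |∫ ω, f ω * g ω ∂μ| = |∫ ω, f ω * h ω ∂μ| := by rw [hfgpull]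
      _ ≤ ∫ ω, |f ω| * |h ω| ∂μ := (by simpa [Real.norm_eq_abs, abs_mul] using norm_integral_le_integral_norm (μ := μ) (fun ω => f ω * h ω))
      _ ≤ ∫ ω, c * |h ω| ∂μ := by
          refine integral_mono_ae (by simpa [abs_mul] using hintfh.abs) (hint.abs.const_mul c) ?_
          filter_upwards [hfb] with ω hω
          
          exact mul_le_mul_of_nonneg_right hω (abs_nonneg _)
      _ = c * ∫ ω, |h ω| ∂μ := integral_const_mul c _
      _ = c * ∫ ω, ε ω * g ω ∂μ := by rw [hεg]


theorem aux_ind {Ω : Type*} {m0 : MeasurableSpace Ω} (μ : Measure Ω) [IsFiniteMeasure μ]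
    {A : Set Ω} (hA : MeasurableSet A) :
    Integrable (A.indicator (fun _ => (1:ℝ))) μ ∧
      ∫ ω, A.indicator (fun _ => (1:ℝ)) ω ∂μ = (μ A).toReal :=
  ⟨(integrable_const (1:ℝ)).indicator hA, integral_indicator_one hA⟩

theorem aux_sign {Ω : Type*} {m0 : MeasurableSpace Ω} (μ : Measure Ω) [IsProbabilityMeasure μ]
    {𝒜 ℬ : MeasurableSpace Ω} (h𝒜 : 𝒜 ≤ m0) (hℬ : ℬ ≤ m0)
    {η ζ : Ω → ℝ} (hηm : Measurable[𝒜] η) (hζm : Measurable[ℬ] ζ)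
    (hη1 : ∀ ω, η ω = 1 ∨ η ω = -1) (hζ1 : ∀ ω, ζ ω = 1 ∨ ζ ω = -1)
    {α : ℝ} (hub : α ∈ upperBounds {r : ℝ | ∃ A B, MeasurableSet[𝒜] A ∧ MeasurableSet[ℬ] B ∧
      r = |(μ (A ∩ B)).toReal - (μ A).toReal * (μ B).toReal|}) :
    (∫ ω, ζ ω * η ω ∂μ) - (∫ ω, ζ ω ∂μ) * (∫ ω, η ω ∂μ) ≤ 4 * α := by
  set A : Set Ω := {ω | η ω = 1} with hA_def
  set B : Set Ω := {ω | ζ ω = 1} with hB_def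
  have hA𝒜 : MeasurableSet[𝒜] A := hηm (measurableSet_singleton 1)
  have hBℬ : MeasurableSet[ℬ] B := hζm (measurableSet_singleton 1)
  have hA : MeasurableSet[m0] A := h𝒜 _ hA𝒜
  have hB : MeasurableSet[m0] B := hℬ _ hBℬ
  have hAB : MeasurableSet[m0] (A ∩ B) := hA.inter hB
  set a : ℝ := (μ A).toReal
  set b : ℝ := (μ B).toReal
  set i : ℝ := (μ (A ∩ B)).toReal
  -- pointwise identities
  have hηeq : ∀ ω, η ω = 2 * A.indicator (fun _ => (1:ℝ)) ω - 1 := by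
    intro ω
    rcases hη1 ω with h | h
    · have hm : ω ∈ A := h
      simp [Set.indicator_of_mem hm, h]; norm_num
    · have hm : ω ∉ A := by simp [hA_def, h]; norm_num
      simp [Set.indicator_of_notMem hm, h]
  have hζeq : ∀ ω, ζ ω = 2 * B.indicator (fun _ => (1:ℝ)) ω - 1 := by
    intro ω
    rcases hζ1 ω with h | h
    · have hm : ω ∈ B := h
      simp [Set.indicator_of_mem hm, h]; norm_num
    · have hm : ω ∉ B := by simp [hB_def, h]; norm_num
      simp [Set.indicator_of_notMem hm, h]
  have hmul : ∀ ω, ζ ω * η ω =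
      (4:ℝ) * (A ∩ B).indicator (fun _ => (1:ℝ)) ω - (2:ℝ) * A.indicator (fun _ => (1:ℝ)) ω - (2:ℝ) * B.indicator (fun _ => (1:ℝ)) ω + 1 := by
    intro ω
    rw [hηeq ω, hζeq ω]
    by_cases hA' : ω ∈ A <;> by_cases hB' : ω ∈ B <;>
      simp [Set.indicator_apply, hA', hB'] <;> ring
  -- integrability of indicators
  have iA : Integrable (A.indicator (fun _ => (1:ℝ))) μ := (aux_ind μ hA).1
  have iB : Integrable (B.indicator (fun _ => (1:ℝ))) μ := (aux_ind μ hB).1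
  have iAB : Integrable ((A ∩ B).indicator (fun _ => (1:ℝ))) μ := (aux_ind μ hAB).1
  have intA : ∫ ω, A.indicator (fun _ => (1:ℝ)) ω ∂μ = a := (aux_ind μ hA).2
  have intB : ∫ ω, B.indicator (fun _ => (1:ℝ)) ω ∂μ = b := (aux_ind μ hB).2
  have intAB : ∫ ω, (A ∩ B).indicator (fun _ => (1:ℝ)) ω ∂μ = i := (aux_ind μ hAB).2
  have j4 : Integrable (fun ω => (4:ℝ) * (A ∩ B).indicator (fun _ => (1:ℝ)) ω) μ := iAB.const_mul 4
  have jA : Integrable (fun ω => (2:ℝ) * A.indicator (fun _ => (1:ℝ)) ω) μ := iA.const_mul 2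
  have jB : Integrable (fun ω => (2:ℝ) * B.indicator (fun _ => (1:ℝ)) ω) μ := iB.const_mul 2
  have hIη : ∫ ω, η ω ∂μ = 2 * a - 1 := by
    rw [integral_congr_ae (Filter.Eventually.of_forall hηeq),
      integral_sub jA (integrable_const 1)]
    simp [integral_const_mul, intA]
  have hIζ : ∫ ω, ζ ω ∂μ = 2 * b - 1 := by
    rw [integral_congr_ae (Filter.Eventually.of_forall hζeq),
      integral_sub jB (integrable_const 1)]
    simp [integral_const_mul, intB]
  have hIζη : ∫ ω, ζ ω * η ω ∂μ = 4 * i - 2 * a - 2 * b + 1 := by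
    have e1 : Integrable (fun ω => (4:ℝ) * (A ∩ B).indicator (fun _ => (1:ℝ)) ω - (2:ℝ) * A.indicator (fun _ => (1:ℝ)) ω) μ := j4.sub jA
    have e2 : Integrable (fun ω =>
        (4:ℝ) * (A ∩ B).indicator (fun _ => (1:ℝ)) ω - (2:ℝ) * A.indicator (fun _ => (1:ℝ)) ω - (2:ℝ) * B.indicator (fun _ => (1:ℝ)) ω) μ := e1.sub jB
    rw [integral_congr_ae (Filter.Eventually.of_forall hmul),
      integral_add e2 (integrable_const 1), integral_sub e1 jB, integral_sub j4 jA]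
    simp [integral_const_mul, intA, intB, intAB]
  have hkey : (∫ ω, ζ ω * η ω ∂μ) - (∫ ω, ζ ω ∂μ) * (∫ ω, η ω ∂μ) = 4 * (i - a * b) := by
    rw [hIζη, hIζ, hIη]; ring
  have hle : i - a * b ≤ α := by
    calc i - a * b ≤ |i - a * b| := le_abs_self _
      _ ≤ α := hub ⟨A, B, hA𝒜, hBℬ, rfl⟩
  rw [hkey]; linarith

/-- Covariance inequality for bounded variables measurable with respect to two
sub-σ-algebras: `|Cov(X,Y)| ≤ 4 b² α(𝒜,ℬ)`. -/
theorem bounded_mixing_covariance_inequality {Ω : Type*} {m0 : MeasurableSpace Ω}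
    (μ : Measure Ω) [IsProbabilityMeasure μ]
    (𝒜 ℬ : MeasurableSpace Ω) (h𝒜 : 𝒜 ≤ m0) (hℬ : ℬ ≤ m0)
    (X Y : Ω → ℝ) (hX : Measurable[𝒜] X) (hY : Measurable[ℬ] Y)
    (b : ℝ) (hb : 0 < b) (hXb : ∀ᵐ ω ∂μ, |X ω| ≤ b) (hYb : ∀ᵐ ω ∂μ, |Y ω| ≤ b)
    (α : ℝ)
    (hα : IsLUB {r : ℝ | ∃ A B, MeasurableSet[𝒜] A ∧ MeasurableSet[ℬ] B ∧
      r = |(μ (A ∩ B)).toReal - (μ A).toReal * (μ B).toReal|} α) :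
    |(∫ ω, X ω * Y ω ∂μ) - (∫ ω, X ω ∂μ) * (∫ ω, Y ω ∂μ)| ≤ 4 * b ^ 2 * α := by
  have hXae : AEStronglyMeasurable[m0] X μ := (hX.mono h𝒜 le_rfl).aestronglyMeasurable
  have hYae : AEStronglyMeasurable[m0] Y μ := (hY.mono hℬ le_rfl).aestronglyMeasurable
  have hXb' : ∀ᵐ ω ∂μ, ‖X ω‖ ≤ b := by simpa [Real.norm_eq_abs] using hXb
  have hYb' : ∀ᵐ ω ∂μ, ‖Y ω‖ ≤ b := by simpa [Real.norm_eq_abs] using hYb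
  have hXint : Integrable X μ := Integrable.mono' (integrable_const b) hXae hXb'
  have hYint : Integrable Y μ := Integrable.mono' (integrable_const b) hYae hYb'
  have hXYint : Integrable (fun ω => X ω * Y ω) μ := hYint.bdd_mul hXae hXb'
  set EY : ℝ := ∫ ω, Y ω ∂μ with hEY
  set g1 : Ω → ℝ := fun ω => Y ω - EY with hg1_def
  have hg1 : Integrable g1 μ := hYint.sub (integrable_const EY)
  obtain ⟨η, hηm, hη1, h1⟩ := aux_step μ h𝒜 hX.stronglyMeasurable hg1 hb.le hXb
  have hXg1 : ∫ ω, X ω * g1 ω ∂μ = (∫ ω, X ω * Y ω ∂μ) - (∫ ω, X ω ∂μ) * EY := by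
    have hptw : ∀ ω, X ω * g1 ω = X ω * Y ω - X ω * EY := fun ω => by simp [hg1_def]; ring
    rw [integral_congr_ae (Filter.Eventually.of_forall hptw),
      integral_sub hXYint (hXint.mul_const EY), integral_mul_const]
  have hηae : AEStronglyMeasurable[m0] η μ := (hηm.mono h𝒜 le_rfl).aestronglyMeasurable
  have hηb : ∀ᵐ ω ∂μ, ‖η ω‖ ≤ 1 :=
    Filter.Eventually.of_forall fun ω => by rcases hη1 ω with h | h <;> simp [h]
  have hηint : Integrable η μ := Integrable.mono' (integrable_const 1) hηae hηb
  set Eη : ℝ := ∫ ω, η ω ∂μ with hEη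
  set g2 : Ω → ℝ := fun ω => η ω - Eη with hg2_def
  have hg2 : Integrable g2 μ := hηint.sub (integrable_const Eη)
  obtain ⟨ζ, hζm, hζ1, h2⟩ := aux_step μ hℬ hY.stronglyMeasurable hg2 hb.le hYb
  have hηYint : Integrable (fun ω => η ω * Y ω) μ := hYint.bdd_mul hηae hηb
  have e1 : ∫ ω, η ω * g1 ω ∂μ = (∫ ω, η ω * Y ω ∂μ) - Eη * EY := by
    have hptw : ∀ ω, η ω * g1 ω = η ω * Y ω - η ω * EY := fun ω => by simp [hg1_def]; ring
    rw [integral_congr_ae (Filter.Eventually.of_forall hptw),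
      integral_sub hηYint (hηint.mul_const EY), integral_mul_const]
  have e2 : ∫ ω, Y ω * g2 ω ∂μ = (∫ ω, η ω * Y ω ∂μ) - Eη * EY := by
    have hptw : ∀ ω, Y ω * g2 ω = η ω * Y ω - Y ω * Eη := fun ω => by simp [hg2_def]; ring
    rw [integral_congr_ae (Filter.Eventually.of_forall hptw),
      integral_sub hηYint (hYint.mul_const Eη), integral_mul_const]
    ring
  have hζae : AEStronglyMeasurable[m0] ζ μ := (hζm.mono hℬ le_rfl).aestronglyMeasurable
  have hζb : ∀ᵐ ω ∂μ, ‖ζ ω‖ ≤ 1 :=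
    Filter.Eventually.of_forall fun ω => by rcases hζ1 ω with h | h <;> simp [h]
  have hζint : Integrable ζ μ := Integrable.mono' (integrable_const 1) hζae hζb
  have hζηint : Integrable (fun ω => ζ ω * η ω) μ := hηint.bdd_mul hζae hζb
  set Eζ : ℝ := ∫ ω, ζ ω ∂μ with hEζ
  have e3 : ∫ ω, ζ ω * g2 ω ∂μ = (∫ ω, ζ ω * η ω ∂μ) - Eζ * Eη := by
    have hptw : ∀ ω, ζ ω * g2 ω = ζ ω * η ω - ζ ω * Eη := fun ω => by simp [hg2_def]; ring
    rw [integral_congr_ae (Filter.Eventually.of_forall hptw),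
      integral_sub hζηint (hζint.mul_const Eη), integral_mul_const]
  have hsign : (∫ ω, ζ ω * η ω ∂μ) - Eζ * Eη ≤ 4 * α :=
    aux_sign μ h𝒜 hℬ hηm hζm hη1 hζ1 hα.1
  calc |(∫ ω, X ω * Y ω ∂μ) - (∫ ω, X ω ∂μ) * (∫ ω, Y ω ∂μ)|
      = |∫ ω, X ω * g1 ω ∂μ| := by rw [hXg1]
    _ ≤ b * ∫ ω, η ω * g1 ω ∂μ := h1
    _ = b * (∫ ω, Y ω * g2 ω ∂μ) := by rw [e1, e2]
    _ ≤ b * |∫ ω, Y ω * g2 ω ∂μ| := mul_le_mul_of_nonneg_left (le_abs_self _) hb.le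
    _ ≤ b * (b * ∫ ω, ζ ω * g2 ω ∂μ) := mul_le_mul_of_nonneg_left h2 hb.le
    _ = b * (b * ((∫ ω, ζ ω * η ω ∂μ) - Eζ * Eη)) := by rw [e3]
    _ ≤ b * (b * (4 * α)) :=
        mul_le_mul_of_nonneg_left (mul_le_mul_of_nonneg_left hsign hb.le) hb.le
    _ = 4 * b ^ 2 * α := by ring
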